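/- Let p ≥ 2, m ≥ 1, c be natural numbers, and let N and a be natural numbers with (p - 1) * N = p^(m+1) - 1 and (p - 1) * a = p^m - 1. Let D be a p × c integer matrix with entries in {-1, 0, 1} satisfying D * Dᵀ = p • I_p - J_p. Let O : Fin (p^(m+1)) → Fin N → Fin p be an array such that any two distinct rows of O agree in exactly a columns. Define the p^(m+1) × (N * c) integer matrix 𝒟 (with columns indexed by Fin N × Fin c) by 𝒟 i (s, t) = D (O i s) t. Then 𝒟 * 𝒟ᵀ = p^(m+1) • I - J, where I and J are the identity and all-ones matrices of order p^(m+1). -/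

import Mathlib

open Matrix

/-- Let `D` be the derived part of a normalized weighing matrix of weight `p`
(`D * Dᵀ = p • I - J`), and let `O` be an orthogonal array on `p` symbols of dimensions
`p^(m+1) × N` in which any two distinct rows agree in exactly `a` columns, where
`(p-1) * N = p^(m+1) - 1` and `(p-1) * a = p^m - 1`.  Then the matrix `𝒟` obtained
from `O` by replacing each symbol by the corresponding row of `D` satisfies
`𝒟 * 𝒟ᵀ = p^(m+1) • I - J`. -/
theorem stmt_5 (p m c N a : ℕ) (hp : 2 ≤ p) (hm : 1 ≤ m)
    (hN : (p - 1) * N = p ^ (m + 1) - 1) (ha : (p - 1) * a = p ^ m - 1)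
    (D : Matrix (Fin p) (Fin c) ℤ)
    (hD01 : ∀ i j, D i j = -1 ∨ D i j = 0 ∨ D i j = 1)
    (hD : D * Dᵀ = (p : ℤ) • 1 - Matrix.of fun _ _ => 1)
    (O : Fin (p ^ (m + 1)) → Fin N → Fin p)
    (hO : ∀ i j : Fin (p ^ (m + 1)), i ≠ j → {s : Fin N | O i s = O j s}.ncard = a) :
    (Matrix.of fun (i : Fin (p ^ (m + 1))) (s : Fin N × Fin c) => D (O i s.1) s.2) *
      (Matrix.of fun (i : Fin (p ^ (m + 1))) (s : Fin N × Fin c) => D (O i s.1) s.2)ᵀ =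
      ((p ^ (m + 1) : ℕ) : ℤ) • 1 - Matrix.of fun _ _ => 1 := by
  have h1 : 1 ≤ p := by omega
  have h2 : 1 ≤ p ^ (m + 1) := Nat.one_le_pow _ _ (by omega)
  have h3 : 1 ≤ p ^ m := Nat.one_le_pow _ _ (by omega)
  zify [h1, h2] at hN
  zify [h1, h3] at ha
  have hNa : (N : ℤ) = p * a + 1 := by
    have hp1 : (p : ℤ) - 1 ≠ 0 := by
      have : (2 : ℤ) ≤ p := by exact_mod_cast hp
      linarith
    apply mul_left_cancel₀ hp1
    rw [hN]
    linear_combination (-(p : ℤ)) * ha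
  have key : ∀ x y : Fin p, ∑ t, D x t * D y t = (if x = y then (p : ℤ) else 0) - 1 := by
    intro x y
    have := congrFun (congrFun hD x) y
    rw [Matrix.sub_apply, Matrix.smul_apply] at this
    simpa [Matrix.mul_apply, Matrix.one_apply, mul_ite] using this
  ext i j
  simp only [Matrix.mul_apply, Matrix.transpose_apply, Matrix.of_apply,
    Fintype.sum_prod_type, key, Matrix.sub_apply, Matrix.smul_apply, Matrix.one_apply,
    smul_eq_mul, Finset.sum_sub_distrib, Finset.sum_const, Finset.card_univ,
    Fintype.card_fin, nsmul_eq_mul, mul_one]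
  by_cases hij : i = j
  · subst hij
    simp only [if_pos rfl, Finset.sum_const, Finset.card_univ, Fintype.card_fin,
      nsmul_eq_mul, mul_one]
    push_cast
    linear_combination hN
  · rw [if_neg hij]
    have hcount : (Finset.univ.filter fun s : Fin N => O i s = O j s).card = a := by
      have := hO i j hij
      rwa [Set.ncard_eq_toFinset_card', Set.toFinset_setOf] at this
    rw [← Finset.sum_filter, Finset.sum_const, hcount, nsmul_eq_mul]
    push_cast
    linear_combination -hNa
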